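/- arXiv:1212.4654 — 2 statements merged into one kernel-verified Lean document; each statement's English description precedes it below -/
import Mathlib

section
/- Let q = p^t with p an odd prime and t ≥ 2, n = q+1, a = n/2, and let r, m be integers with r ≥ 1, m ≥ 2, and 3 ≤ r+m ≤ a−1. Then there exists a convolutional code over F_q with parameters (n, 2r+1, 2m; m, d_f) whose free distance satisfies d_f ≥ n − 2(r+m). -/
/-- The convolutional code generated by the polynomial matrix `G`. -/
def convCode {F : Type*} [Field F] {k n : ℕ}
    (G : Matrix (Fin k) (Fin n) (Polynomial F)) : Set (Fin n → Polynomial F) :=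
  {v | ∃ u : Fin k → Polynomial F, ∀ j, v j = ∑ i : Fin k, u i * G i j}

/-- A polynomial generator matrix is basic if it has a polynomial right inverse. -/
def isBasic {F : Type*} [Field F] {k n : ℕ}
    (G : Matrix (Fin k) (Fin n) (Polynomial F)) : Prop :=
  ∃ R : Matrix (Fin n) (Fin k) (Polynomial F), G * R = 1

/-- The `i`-th constraint length: the maximal degree in row `i`. -/
def rowDegree {F : Type*} [Field F] {k n : ℕ}
    (G : Matrix (Fin k) (Fin n) (Polynomial F)) (i : Fin k) : ℕ :=
  Finset.univ.sup fun j => (G i j).natDegree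

/-- The degree (overall constraint length) `γ = ∑ γ_i` of a generator matrix. -/
def convDegree {F : Type*} [Field F] {k n : ℕ}
    (G : Matrix (Fin k) (Fin n) (Polynomial F)) : ℕ :=
  ∑ i : Fin k, rowDegree G i

/-- The memory `m = max γ_i` of a generator matrix. -/
def convMemory {F : Type*} [Field F] {k n : ℕ}
    (G : Matrix (Fin k) (Fin n) (Polynomial F)) : ℕ :=
  Finset.univ.sup fun i => rowDegree G i

/-- A basic generator matrix is reduced if its overall constraint length is minimal
among all basic generator matrices of the same code. -/
def isReduced {F : Type*} [Field F] {k n : ℕ}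
    (G : Matrix (Fin k) (Fin n) (Polynomial F)) : Prop :=
  isBasic G ∧ ∀ G' : Matrix (Fin k) (Fin n) (Polynomial F),
    isBasic G' → convCode G' = convCode G → convDegree G ≤ convDegree G'

/-- The weight of `v(D) ∈ F[D]^n`: the total number of nonzero coefficients. -/
def polyWeight {F : Type*} [Field F] [DecidableEq F] {n : ℕ}
    (v : Fin n → Polynomial F) : ℕ :=
  ∑ j : Fin n, (v j).support.card

/- ### Auxiliary lemmas -/

open Polynomial in
lemma predDeg {F : Type*} [Field F] {k n : ℕ} (γ : Fin k → ℕ)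
    (g : Matrix (Fin k) (Fin n) (Polynomial F))
    (hdeg : ∀ i j, (g i j).natDegree ≤ γ i)
    (hL : ∀ c : Fin k → F, (∀ j, ∑ i, c i * (g i j).coeff (γ i) = 0) → ∀ i, c i = 0)
    (u : Fin k → Polynomial F) (i0 : Fin k) (hu : u i0 ≠ 0) :
    (u i0).natDegree + γ i0 ≤ Finset.univ.sup (fun j => (∑ i, u i * g i j).natDegree) := by
  classical
  set S := Finset.univ.filter (fun i => u i ≠ 0) with hS
  have hi0S : i0 ∈ S := by simp [hS, hu]
  set d := S.sup (fun i => (u i).natDegree + γ i) with hd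
  obtain ⟨i1, hi1S, hi1⟩ := Finset.exists_mem_eq_sup S ⟨i0, hi0S⟩ (fun i => (u i).natDegree + γ i)
  have hu1 : u i1 ≠ 0 := by simpa [hS] using hi1S
  have key : ∀ i j, (u i * g i j).coeff d = (u i).coeff (d - γ i) * (g i j).coeff (γ i) := by
    intro i j
    by_cases hui : u i = 0
    · simp [hui]
    · have hiS : i ∈ S := by simp [hS, hui]
      have hle : (u i).natDegree + γ i ≤ d := Finset.le_sup (f := fun i => (u i).natDegree + γ i) hiS
      have hγd : γ i ≤ d := le_trans (Nat.le_add_left _ _) hle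
      rw [Polynomial.coeff_mul, Finset.sum_eq_single (d - γ i, γ i)]
      · intro b hb hbne
        rw [Finset.HasAntidiagonal.mem_antidiagonal] at hb
        rcases lt_trichotomy b.2 (γ i) with h2 | h2 | h2
        · have : (u i).natDegree < b.1 := by omega
          rw [Polynomial.coeff_eq_zero_of_natDegree_lt this, zero_mul]
        · exfalso; apply hbne
          have : b.1 = d - γ i := by omega
          exact Prod.ext this h2
        · rw [Polynomial.coeff_eq_zero_of_natDegree_lt (lt_of_le_of_lt (hdeg i j) h2), mul_zero]
      · intro hmem
        exact absurd (Finset.HasAntidiagonal.mem_antidiagonal.mpr (by omega)) hmem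
  have hc1 : (u i1).coeff (d - γ i1) ≠ 0 := by
    have : d - γ i1 = (u i1).natDegree := by omega
    rw [this]
    exact Polynomial.leadingCoeff_ne_zero.mpr hu1
  have : ¬ ∀ j, ∑ i, (fun i => (u i).coeff (d - γ i)) i * (g i j).coeff (γ i) = 0 := by
    intro h
    exact hc1 (hL _ h i1)
  push_neg at this
  obtain ⟨j, hj⟩ := this
  have hcoeff : (∑ i, u i * g i j).coeff d ≠ 0 := by
    rw [Polynomial.finset_sum_coeff]
    simpa [key] using hj
  calc (u i0).natDegree + γ i0 ≤ d := Finset.le_sup (f := fun i => (u i).natDegree + γ i) hi0S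
    _ ≤ (∑ i, u i * g i j).natDegree := Polynomial.le_natDegree_of_ne_zero hcoeff
    _ ≤ _ := Finset.le_sup (f := fun j => (∑ i, u i * g i j).natDegree) (Finset.mem_univ j)

open Polynomial in
lemma rsWeight {F : Type*} [Field F] [DecidableEq F] {q K n : ℕ}
    (hK : K ≤ q) (hK2 : 2 ≤ K) (hn : n = q + 1) (e : Fin q ≃ F)
    (M : Matrix (Fin K) (Fin n) F)
    (hM : ∀ s j, M s j = if h : (j : ℕ) < q then (e ⟨j, h⟩) ^ (s : ℕ)
      else if (s : ℕ) = K - 1 then 1 else 0)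
    (c : Fin K → F) (hc : c ≠ 0) :
    n - (K - 1) ≤ (Finset.univ.filter (fun j => ∑ s, c s * M s j ≠ 0)).card := by
  classical
  set f : Polynomial F := ∑ s : Fin K, Polynomial.monomial (s : ℕ) (c s) with hf
  have hfc : ∀ s0 : Fin K, f.coeff (s0 : ℕ) = c s0 := by
    intro s0
    rw [hf, Polynomial.finset_sum_coeff, Finset.sum_eq_single s0]
    · simp [Polynomial.coeff_monomial]
    · intro b _ hb
      simp only [Polynomial.coeff_monomial]
      rw [if_neg (fun h => hb (Fin.val_injective h))]
    · simp
  obtain ⟨s0, hs0⟩ := Function.ne_iff.mp hc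
  have hf0 : f ≠ 0 := fun h => hs0 (by rw [← hfc s0, h]; simp)
  have hval : ∀ j : Fin n, ∀ hj : (j : ℕ) < q,
      ∑ s, c s * M s j = f.eval (e ⟨j, hj⟩) := by
    intro j hj
    rw [hf, Polynomial.eval_finset_sum]
    exact Finset.sum_congr rfl fun s _ => by simp [hM, hj]
  have hKlast : ((⟨K - 1, by omega⟩ : Fin K) : ℕ) = K - 1 := rfl
  have hvalq : ∀ j : Fin n, ¬ (j : ℕ) < q → ∑ s, c s * M s j = c ⟨K - 1, by omega⟩ := by
    intro j hj
    rw [Finset.sum_eq_single (⟨K - 1, by omega⟩ : Fin K)]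
    · simp [hM, hj]
    · intro b _ hb
      have : (b : ℕ) ≠ K - 1 := fun h => hb (Fin.val_injective (by rw [h, hKlast]))
      simp [hM, hj, this]
    · simp
  set Z := Finset.univ.filter (fun j : Fin n => ∑ s, c s * M s j = 0) with hZ
  set Zlt := Z.filter (fun j : Fin n => (j : ℕ) < q) with hZlt
  have hZltcard : Zlt.card ≤ f.natDegree := by
    have hmaps : ∀ j ∈ Zlt, (fun j : Fin n => if h : (j:ℕ) < q then e ⟨j, h⟩ else 0) j
        ∈ f.roots.toFinset := by
      intro j hj
      rw [hZlt, Finset.mem_filter] at hj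
      obtain ⟨hjZ, hjlt⟩ := hj
      rw [hZ, Finset.mem_filter] at hjZ
      simp only [hjlt, dif_pos]
      rw [Multiset.mem_toFinset, Polynomial.mem_roots hf0]
      exact Polynomial.IsRoot.def.mpr (by rw [← hval j hjlt]; exact hjZ.2)
    have hinj : Set.InjOn (fun j : Fin n => if h : (j:ℕ) < q then e ⟨j, h⟩ else 0) Zlt := by
      intro x hx y hy hxy
      have hx2 : (x : ℕ) < q := (Finset.mem_filter.mp (Finset.mem_coe.mp hx)).2
      have hy2 : (y : ℕ) < q := (Finset.mem_filter.mp (Finset.mem_coe.mp hy)).2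
      simp only [hx2, hy2, dif_pos] at hxy
      have := e.injective hxy
      exact Fin.ext (by simpa [Fin.mk.injEq] using this)
    calc Zlt.card ≤ f.roots.toFinset.card := Finset.card_le_card_of_injOn _ hmaps hinj
      _ ≤ Multiset.card f.roots := f.roots.toFinset_card_le
      _ ≤ f.natDegree := Polynomial.card_roots' f
  have hZcard : Z.card ≤ K - 1 := by
    by_cases hcK : c ⟨K - 1, by omega⟩ = 0
    · have hdeg : f.natDegree ≤ K - 2 := by
        rw [hf]
        apply Polynomial.natDegree_sum_le_of_forall_le
        intro s _
        by_cases hsK : (s : ℕ) = K - 1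
        · have : s = ⟨K - 1, by omega⟩ := Fin.ext hsK
          rw [this, hcK]; simp
        · exact le_trans (Polynomial.natDegree_monomial_le _) (by omega)
      have hsplit : Zlt.card + (Z.filter (fun j : Fin n => ¬ (j:ℕ) < q)).card = Z.card :=
        Finset.card_filter_add_card_filter_not _
      have hone : (Z.filter (fun j : Fin n => ¬ (j:ℕ) < q)).card ≤ 1 := by
        apply Finset.card_le_one.mpr
        intro a ha b hb
        rw [Finset.mem_filter] at ha hb
        apply Fin.ext
        have := a.isLt; have := b.isLt
        omega
      omega
    · have hdeg : f.natDegree ≤ K - 1 := by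
        rw [hf]
        apply Polynomial.natDegree_sum_le_of_forall_le
        intro s _
        exact le_trans (Polynomial.natDegree_monomial_le _) (by omega)
      have : Zlt = Z := by
        rw [hZlt]
        apply Finset.filter_true_of_mem
        intro j hj
        by_contra hjq
        rw [hZ, Finset.mem_filter] at hj
        exact hcK (by rw [← hvalq j hjq]; exact hj.2)
      rw [← this]
      omega
  have h2 : Z.card + (Finset.univ.filter (fun j : Fin n => ¬ ∑ s, c s * M s j = 0)).card
      = n := by
    rw [hZ, Finset.card_filter_add_card_filter_not]
    simp
  have h3 : (Finset.univ.filter (fun j : Fin n => ¬ ∑ s, c s * M s j = 0))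
      = (Finset.univ.filter (fun j : Fin n => ∑ s, c s * M s j ≠ 0)) := by
    apply Finset.filter_congr
    intro j _
    simp [Ne]
  rw [h3] at h2
  omega

lemma rsRightInv {F : Type*} [Field F] [DecidableEq F] {q K n : ℕ}
    (hK : K ≤ q) (hn : n = q + 1) (e : Fin q ≃ F)
    (M : Matrix (Fin K) (Fin n) F)
    (hM : ∀ s j, M s j = if h : (j : ℕ) < q then (e ⟨j, h⟩) ^ (s : ℕ)
      else if (s : ℕ) = K - 1 then 1 else 0) :
    ∃ N : Matrix (Fin n) (Fin K) F, M * N = 1 := by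
  classical
  set w : Fin K → F := fun s => e ⟨s, lt_of_lt_of_le s.isLt hK⟩ with hw
  have hwinj : Function.Injective w := by
    intro a b hab
    have := e.injective hab
    exact Fin.ext (by simpa [Fin.mk.injEq] using this)
  set V : Matrix (Fin K) (Fin K) F := (Matrix.vandermonde w).transpose with hV
  have hVdet : IsUnit V.det := by
    rw [hV, Matrix.det_transpose]
    exact isUnit_iff_ne_zero.mpr (Matrix.det_vandermonde_ne_zero_iff.mpr hwinj)
  have hVinv : V * V⁻¹ = 1 := Matrix.mul_nonsing_inv V hVdet
  refine ⟨fun j s' => if h : (j : ℕ) < K then V⁻¹ ⟨j, h⟩ s' else 0, ?_⟩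
  ext s s'
  set g : ℕ → F := fun jv => if h : jv < K then
      (e ⟨jv, lt_of_lt_of_le h hK⟩ ^ (s : ℕ)) * V⁻¹ ⟨jv, h⟩ s' else 0 with hg
  have hsum : ∀ j : Fin n, M s j * (if h : (j : ℕ) < K then V⁻¹ ⟨j, h⟩ s' else 0)
      = g (j : ℕ) := by
    intro j
    rw [hg]
    by_cases h : (j : ℕ) < K
    · simp only [h, dif_pos, hM, lt_of_lt_of_le h hK]
    · simp [h]
  show ∑ j : Fin n, M s j * _ = (1 : Matrix (Fin K) (Fin K) F) s s'
  calc ∑ j : Fin n, M s j * (if h : (j : ℕ) < K then V⁻¹ ⟨j, h⟩ s' else 0)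
      = ∑ j : Fin n, g (j : ℕ) :=
        Finset.sum_congr rfl fun j _ => hsum j
    _ = ∑ jv ∈ Finset.range n, g jv := Fin.sum_univ_eq_sum_range g n
    _ = ∑ jv ∈ Finset.range K, g jv := by
        refine (Finset.sum_subset ?_ ?_).symm
        · exact Finset.range_subset_range.mpr (by omega)
        · intro x _ hx
          rw [Finset.mem_range] at hx
          rw [hg]
          simp [hx]
    _ = ∑ j' : Fin K, g (j' : ℕ) := (Fin.sum_univ_eq_sum_range g K).symm
    _ = ∑ j' : Fin K, V s j' * V⁻¹ j' s' := by
        refine Finset.sum_congr rfl fun j' _ => ?_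
        rw [hg]
        simp only [j'.isLt, dif_pos, hV, Matrix.transpose_apply, Matrix.vandermonde, hw]
        congr 1
    _ = (1 : Matrix (Fin K) (Fin K) F) s s' := by rw [← hVinv]; rfl

def gamF (m : ℕ) {k : ℕ} (i : Fin k) : ℕ := if (i : ℕ) < 2 then m else 0

def idxF (m : ℕ) {k : ℕ} (i : Fin k) (ℓ : ℕ) : ℕ :=
  if (i : ℕ) = 0 then ℓ else if (i : ℕ) = 1 then m + 1 + ℓ else 2 * m + (i : ℕ)

lemma idxF_lt {m r : ℕ} (i : Fin (2 * r + 1)) (ℓ : ℕ) (hℓ : ℓ ≤ gamF m i) :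
    idxF m i ℓ < 2 * (r + m) + 1 := by
  have := i.isLt
  simp only [gamF] at hℓ
  simp only [idxF]
  split_ifs at hℓ ⊢ <;> omega

lemma idxF_inj {m k : ℕ} (i i' : Fin k) (ℓ ℓ' : ℕ) (hℓ : ℓ ≤ gamF m i)
    (hℓ' : ℓ' ≤ gamF m i') (h : idxF m i ℓ = idxF m i' ℓ') : (i : ℕ) = (i' : ℕ) ∧ ℓ = ℓ' := by
  simp only [gamF] at hℓ hℓ'
  simp only [idxF] at h
  split_ifs at hℓ hℓ' h <;> omega

lemma gamF_sum {m r : ℕ} (hr : 1 ≤ r) : ∑ i : Fin (2 * r + 1), gamF m i = 2 * m := by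
  have h1 : ∑ i : Fin (2 * r + 1), gamF m i
      = ∑ jv ∈ Finset.range (2 * r + 1), (fun jv => if jv < 2 then m else 0) jv := by
    rw [← Fin.sum_univ_eq_sum_range]
    rfl
  have h2 : ∑ jv ∈ Finset.range (2 * r + 1), (fun jv => if jv < 2 then m else 0) jv
      = ∑ jv ∈ Finset.range 2, (fun jv => if jv < 2 then m else 0) jv :=
    (Finset.sum_subset (Finset.range_subset_range.mpr (by omega : 2 ≤ 2 * r + 1))
      (fun x _ hx => by simp_all)).symm
  rw [h1, h2]
  simp [Finset.sum_range_succ]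
  omega

lemma gamF_sup {m r : ℕ} : (Finset.univ.sup fun i : Fin (2 * r + 1) => gamF m i) = m := by
  apply le_antisymm
  · exact Finset.sup_le fun i _ => by simp only [gamF]; split_ifs <;> omega
  · have : gamF m (0 : Fin (2 * r + 1)) = m := by simp [gamF]
    calc m = gamF m (0 : Fin (2 * r + 1)) := this.symm
      _ ≤ _ := Finset.le_sup (Finset.mem_univ _)

lemma sum_pick {F : Type*} [Field F] {K n : ℕ} (M : Matrix (Fin K) (Fin n) F)
    (a : F) (t : ℕ) (P : Prop) [Decidable P] (hP : P → t < K) (j : Fin n) :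
    ∑ s : Fin K, (if P ∧ t = (s : ℕ) then a else 0) * M s j
      = if h : P then a * M ⟨t, hP h⟩ j else 0 := by
  by_cases hp : P
  · rw [dif_pos hp, Finset.sum_eq_single (⟨t, hP hp⟩ : Fin K)]
    · simp [hp]
    · intro b _ hb
      rw [if_neg, zero_mul]
      rintro ⟨-, h2⟩
      exact hb (Fin.ext h2.symm)
    · simp
  · simp [hp]

theorem mainAux {F : Type*} [Field F] [DecidableEq F] (q n r m : ℕ)
    (hq : 2 * (r + m) + 1 ≤ q) (hn : n = q + 1) (hr : 1 ≤ r) (hm : 2 ≤ m)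
    (M : Matrix (Fin (2 * (r + m) + 1)) (Fin n) F)
    (hMw : ∀ c : Fin (2 * (r + m) + 1) → F, c ≠ 0 →
      n - 2 * (r + m) ≤ (Finset.univ.filter (fun j => ∑ s, c s * M s j ≠ 0)).card)
    (N : Matrix (Fin n) (Fin (2 * (r + m) + 1)) F) (hMN : M * N = 1) :
    ∃ G : Matrix (Fin (2 * r + 1)) (Fin n) (Polynomial F),
      isReduced G ∧ convDegree G = 2 * m ∧ convMemory G = m ∧
      (∀ v ∈ convCode G, v ≠ 0 → n - 2 * (r + m) ≤ polyWeight v) := by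
  classical
  have hn2 : 2 ≤ n - 2 * (r + m) := by omega
  -- rows of M are linearly independent
  have hMind : ∀ c : Fin (2 * (r + m) + 1) → F, (∀ j, ∑ s, c s * M s j = 0) → c = 0 := by
    intro c hc
    by_contra hc0
    have h1 := hMw c hc0
    have h2 : (Finset.univ.filter (fun j => ∑ s, c s * M s j ≠ 0)) = ∅ :=
      Finset.filter_eq_empty_iff.mpr (fun j _ => fun hh => hh (hc j))
    rw [h2] at h1
    simp at h1
    omega
  have hrowne : ∀ s, ∃ j, M s j ≠ 0 := by
    intro s
    by_contra h
    push_neg at h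
    have h0 : (fun s' => if s' = s then (1 : F) else 0) = 0 := by
      apply hMind
      intro j
      rw [Finset.sum_eq_single s]
      · simp [h j]
      · intro b _ hb; simp [hb]
      · simp
    have := congrFun h0 s
    simp at this
  set Mrow : ℕ → Fin n → F := fun s j => if h : s < 2 * (r + m) + 1 then M ⟨s, h⟩ j else 0
    with hMrow
  set G : Matrix (Fin (2 * r + 1)) (Fin n) (Polynomial F) :=
    fun i j => ∑ ℓ ∈ Finset.range (gamF m i + 1), Polynomial.monomial ℓ (Mrow (idxF m i ℓ) j)
    with hG
  have hGcoeff : ∀ i j b, (G i j).coeff b = if b ≤ gamF m i then Mrow (idxF m i b) j else 0 := by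
    intro i j b
    rw [hG]
    simp only
    rw [Polynomial.finset_sum_coeff]
    by_cases hb : b ≤ gamF m i
    · rw [if_pos hb, Finset.sum_eq_single b]
      · simp [Polynomial.coeff_monomial]
      · intro ℓ _ hℓb
        simp [Polynomial.coeff_monomial, hℓb]
      · intro hb'
        exact absurd (Finset.mem_range.mpr (by omega)) hb'
    · rw [if_neg hb]
      apply Finset.sum_eq_zero
      intro ℓ hℓ
      rw [Finset.mem_range] at hℓ
      rw [Polynomial.coeff_monomial, if_neg (by omega)]
  have hGdeg : ∀ i j, (G i j).natDegree ≤ gamF m i := by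
    intro i j
    rw [hG]
    simp only
    apply Polynomial.natDegree_sum_le_of_forall_le
    intro ℓ hℓ
    rw [Finset.mem_range] at hℓ
    exact le_trans (Polynomial.natDegree_monomial_le _) (by omega)
  have hleadlt : ∀ i : Fin (2 * r + 1), idxF m i (gamF m i) < 2 * (r + m) + 1 :=
    fun i => idxF_lt i _ le_rfl
  have hGlead : ∀ i j, (G i j).coeff (gamF m i) = M ⟨idxF m i (gamF m i), hleadlt i⟩ j := by
    intro i j
    rw [hGcoeff i j _, if_pos le_rfl, hMrow]
    simp only
    rw [dif_pos (hleadlt i)]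
  -- independence of leading coefficient vectors
  have hLind : ∀ c : Fin (2 * r + 1) → F,
      (∀ j, ∑ i, c i * (G i j).coeff (gamF m i) = 0) → ∀ i, c i = 0 := by
    intro c hc i
    set c' : Fin (2 * (r + m) + 1) → F :=
      fun s => ∑ i' : Fin (2 * r + 1),
        if idxF m i' (gamF m i') = (s : ℕ) then c i' else 0 with hc'
    have hc'val : ∀ j, ∑ s, c' s * M s j = ∑ i', c i' * (G i' j).coeff (gamF m i') := by
      intro j
      rw [hc']
      simp only
      calc ∑ s : Fin (2 * (r + m) + 1),
              (∑ i', if idxF m i' (gamF m i') = (s : ℕ) then c i' else 0) * M s j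
          = ∑ s : Fin (2 * (r + m) + 1), ∑ i',
              (if idxF m i' (gamF m i') = (s : ℕ) then c i' else 0) * M s j := by
            exact Finset.sum_congr rfl fun s _ => Finset.sum_mul _ _ _
        _ = ∑ i', ∑ s : Fin (2 * (r + m) + 1),
              (if idxF m i' (gamF m i') = (s : ℕ) then c i' else 0) * M s j :=
            Finset.sum_comm
        _ = ∑ i', c i' * (G i' j).coeff (gamF m i') := by
            refine Finset.sum_congr rfl fun i' _ => ?_
            have := sum_pick M (c i') (idxF m i' (gamF m i')) True
              (fun _ => hleadlt i') j
            simp only [true_and, dif_pos trivial] at this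
            rw [this, hGlead]
    have hc'0 := hMind c' (fun j => by rw [hc'val]; exact hc j)
    have hci : c' ⟨idxF m i (gamF m i), hleadlt i⟩ = c i := by
      rw [hc']
      simp only
      rw [Finset.sum_eq_single i]
      · simp
      · intro b _ hb
        rw [if_neg]
        intro hIdx
        exact hb (Fin.ext (idxF_inj b i _ _ le_rfl le_rfl hIdx).1)
      · simp
    rw [← hci, hc'0]
    simp
  -- row degrees
  have hrowdeg : ∀ i, rowDegree G i = gamF m i := by
    intro i
    apply le_antisymm
    · exact Finset.sup_le fun j _ => hGdeg i j
    · obtain ⟨j, hj⟩ := hrowne ⟨idxF m i (gamF m i), hleadlt i⟩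
      have h1 : gamF m i ≤ (G i j).natDegree :=
        Polynomial.le_natDegree_of_ne_zero (by rw [hGlead]; exact hj)
      exact le_trans h1 (Finset.le_sup (f := fun j => (G i j).natDegree) (Finset.mem_univ j))
  have hcdeg : convDegree G = 2 * m := by
    unfold convDegree
    rw [Finset.sum_congr rfl fun i _ => hrowdeg i]
    exact gamF_sum hr
  have hcmem : convMemory G = m := by
    unfold convMemory
    rw [Finset.sup_congr rfl fun i _ => hrowdeg i]
    exact gamF_sup
  -- basicness
  have hidx0lt : ∀ i' : Fin (2 * r + 1), idxF m i' 0 < 2 * (r + m) + 1 :=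
    fun i' => idxF_lt i' 0 (Nat.zero_le _)
  set R : Matrix (Fin n) (Fin (2 * r + 1)) (Polynomial F) :=
    fun j i' => Polynomial.C (N j ⟨idxF m i' 0, hidx0lt i'⟩) with hR
  have hGRbasic : G * R = 1 := by
    apply Matrix.ext
    intro i i'
    rw [Matrix.mul_apply, Matrix.one_apply]
    have hstep : ∀ j, G i j * R j i'
        = ∑ ℓ ∈ Finset.range (gamF m i + 1),
            Polynomial.monomial ℓ (Mrow (idxF m i ℓ) j * N j ⟨idxF m i' 0, hidx0lt i'⟩) := by
      intro j
      rw [hG, hR]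
      simp only
      rw [Finset.sum_mul]
      exact Finset.sum_congr rfl fun ℓ _ => Polynomial.monomial_mul_C
    calc ∑ j, G i j * R j i'
        = ∑ j, ∑ ℓ ∈ Finset.range (gamF m i + 1),
            Polynomial.monomial ℓ (Mrow (idxF m i ℓ) j * N j ⟨idxF m i' 0, hidx0lt i'⟩) :=
          Finset.sum_congr rfl fun j _ => hstep j
      _ = ∑ ℓ ∈ Finset.range (gamF m i + 1), ∑ j,
            Polynomial.monomial ℓ (Mrow (idxF m i ℓ) j * N j ⟨idxF m i' 0, hidx0lt i'⟩) :=
          Finset.sum_comm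
      _ = ∑ ℓ ∈ Finset.range (gamF m i + 1),
            Polynomial.monomial ℓ (∑ j, Mrow (idxF m i ℓ) j * N j ⟨idxF m i' 0, hidx0lt i'⟩) := by
          refine Finset.sum_congr rfl fun ℓ _ => ?_
          rw [← map_sum]
      _ = ∑ ℓ ∈ Finset.range (gamF m i + 1),
            Polynomial.monomial ℓ (if i = i' ∧ ℓ = 0 then (1 : F) else 0) := by
          refine Finset.sum_congr rfl fun ℓ hℓ => ?_
          rw [Finset.mem_range] at hℓ
          have hℓγ : ℓ ≤ gamF m i := by omega
          have hlt := idxF_lt i ℓ hℓγ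
          have hMr : ∀ j, Mrow (idxF m i ℓ) j = M ⟨idxF m i ℓ, hlt⟩ j := by
            intro j
            rw [hMrow]
            simp only
            rw [dif_pos hlt]
          congr 1
          calc ∑ j, Mrow (idxF m i ℓ) j * N j ⟨idxF m i' 0, hidx0lt i'⟩
              = ∑ j, M ⟨idxF m i ℓ, hlt⟩ j * N j ⟨idxF m i' 0, hidx0lt i'⟩ :=
                Finset.sum_congr rfl fun j _ => by rw [hMr j]
            _ = (M * N) ⟨idxF m i ℓ, hlt⟩ ⟨idxF m i' 0, hidx0lt i'⟩ := (Matrix.mul_apply).symm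
            _ = if i = i' ∧ ℓ = 0 then 1 else 0 := by
                rw [hMN, Matrix.one_apply]
                by_cases hii : i = i' ∧ ℓ = 0
                · rw [if_pos hii, if_pos]
                  obtain ⟨h1, h2⟩ := hii
                  subst h1; subst h2
                  rfl
                · rw [if_neg hii, if_neg]
                  intro hcon
                  apply hii
                  have hvals : idxF m i ℓ = idxF m i' 0 := by
                    have := congrArg Fin.val hcon
                    simpa using this
                  obtain ⟨h1, h2⟩ := idxF_inj i i' ℓ 0 hℓγ (Nat.zero_le _) hvals
                  exact ⟨Fin.ext h1, h2⟩
      _ = if i = i' then 1 else 0 := by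
          by_cases hii : i = i'
          · rw [if_pos hii, Finset.sum_eq_single 0]
            · simp [hii]
            · intro ℓ _ hℓ0
              have : ¬ (i = i' ∧ ℓ = 0) := fun hh => hℓ0 hh.2
              rw [if_neg this]
              simp
            · intro h0
              exact absurd (Finset.mem_range.mpr (by omega)) h0
          · rw [if_neg hii]
            apply Finset.sum_eq_zero
            intro ℓ _
            have : ¬ (i = i' ∧ ℓ = 0) := fun hh => hii hh.1
            rw [if_neg this]
            simp
  -- minimality (reducedness)
  have hmin : ∀ G' : Matrix (Fin (2 * r + 1)) (Fin n) (Polynomial F),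
      isBasic G' → convCode G' = convCode G → convDegree G ≤ convDegree G' := by
    intro G' hG'b hcode
    obtain ⟨R', hR'⟩ := hG'b
    -- rows of G' are in convCode G
    have hrows : ∀ i, ∃ u : Fin (2 * r + 1) → Polynomial F, ∀ j, G' i j = ∑ l, u l * G l j := by
      intro i
      have hmem : (fun j => G' i j) ∈ convCode G' := by
        refine ⟨fun l => if l = i then 1 else 0, fun j => ?_⟩
        rw [Finset.sum_eq_single i] <;> simp +contextual
      rw [hcode] at hmem
      exact hmem
    choose W hW using hrows
    set U : Matrix (Fin (2 * r + 1)) (Fin (2 * r + 1)) (Polynomial F) := Matrix.of W with hUdef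
    have hU : G' = U * G := by
      apply Matrix.ext
      intro i j
      rw [Matrix.mul_apply]
      exact hW i j
    -- rows of G are in convCode G'
    have hrows' : ∀ i, ∃ u : Fin (2 * r + 1) → Polynomial F, ∀ j, G i j = ∑ l, u l * G' l j := by
      intro i
      have hmem : (fun j => G i j) ∈ convCode G := by
        refine ⟨fun l => if l = i then 1 else 0, fun j => ?_⟩
        rw [Finset.sum_eq_single i] <;> simp +contextual
      rw [← hcode] at hmem
      exact hmem
    choose W' hW' using hrows'
    set U' : Matrix (Fin (2 * r + 1)) (Fin (2 * r + 1)) (Polynomial F) := Matrix.of W' with hU'def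
    have hU' : G = U' * G' := by
      apply Matrix.ext
      intro i j
      rw [Matrix.mul_apply]
      exact hW' i j
    have h1 : G' = (U * U') * G' := by
      rw [Matrix.mul_assoc, ← hU', ← hU]
    have hUU' : U * U' = 1 := by
      calc U * U' = (U * U') * (G' * R') := by rw [hR', Matrix.mul_one]
        _ = ((U * U') * G') * R' := (Matrix.mul_assoc _ _ _).symm
        _ = G' * R' := by rw [← h1]
        _ = 1 := hR'
    have hdetU : U.det ≠ 0 := by
      intro h
      have hd : U.det * U'.det = 1 := by rw [← Matrix.det_mul, hUU', Matrix.det_one]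
      rw [h, zero_mul] at hd
      exact one_ne_zero hd.symm
    have hperm : ∃ σ : Equiv.Perm (Fin (2 * r + 1)), ∀ i, U (σ i) i ≠ 0 := by
      by_contra h
      push_neg at h
      apply hdetU
      rw [Matrix.det_apply]
      apply Finset.sum_eq_zero
      intro σ _
      obtain ⟨i, hi⟩ := h σ
      have hz : ∏ i' : Fin (2 * r + 1), U (σ i') i' = 0 :=
        Finset.prod_eq_zero (Finset.mem_univ i) hi
      rw [hz]
      simp
    obtain ⟨σ, hσ⟩ := hperm
    have hstep : ∀ i, gamF m i ≤ rowDegree G' (σ i) := by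
      intro i
      have hpred := predDeg (gamF m) G hGdeg hLind (fun l => U (σ i) l) i (hσ i)
      have heq : (fun j => (∑ l, U (σ i) l * G l j).natDegree)
          = fun j => (G' (σ i) j).natDegree := by
        funext j
        exact congrArg Polynomial.natDegree (hW (σ i) j).symm
      calc gamF m i ≤ (U (σ i) i).natDegree + gamF m i := Nat.le_add_left _ _
        _ ≤ Finset.univ.sup (fun j => (∑ l, U (σ i) l * G l j).natDegree) := hpred
        _ = rowDegree G' (σ i) := by unfold rowDegree; rw [heq]
    calc convDegree G = ∑ i, gamF m i := by
          unfold convDegree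
          exact Finset.sum_congr rfl fun i _ => hrowdeg i
      _ ≤ ∑ i, rowDegree G' (σ i) := Finset.sum_le_sum fun i _ => hstep i
      _ = ∑ i, rowDegree G' i := Equiv.sum_comp σ (rowDegree G')
      _ = convDegree G' := rfl
  -- distance bound
  have hdist : ∀ v ∈ convCode G, v ≠ 0 → n - 2 * (r + m) ≤ polyWeight v := by
    intro v hv hv0
    obtain ⟨u, hu⟩ := hv
    obtain ⟨j0, hj0⟩ := Function.ne_iff.mp hv0
    have hvj0 : v j0 ≠ 0 := by simpa using hj0
    set ℓ := (v j0).natDegree with hℓdef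
    have hℓ : (v j0).coeff ℓ ≠ 0 := Polynomial.leadingCoeff_ne_zero.mpr hvj0
    set c : Fin (2 * (r + m) + 1) → F :=
      fun s => ∑ i, ∑ x ∈ Finset.HasAntidiagonal.antidiagonal ℓ,
        (if x.2 ≤ gamF m i ∧ idxF m i x.2 = (s : ℕ) then (u i).coeff x.1 else 0) with hcdef
    have hlev : ∀ j, (v j).coeff ℓ = ∑ s, c s * M s j := by
      intro j
      rw [hu j, Polynomial.finset_sum_coeff, hcdef]
      simp only
      calc ∑ i, (u i * G i j).coeff ℓ
          = ∑ i, ∑ x ∈ Finset.HasAntidiagonal.antidiagonal ℓ,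
              (u i).coeff x.1 * (if h : x.2 ≤ gamF m i
                then M ⟨idxF m i x.2, idxF_lt i x.2 h⟩ j else 0) := by
            refine Finset.sum_congr rfl fun i _ => ?_
            rw [Polynomial.coeff_mul]
            refine Finset.sum_congr rfl fun x _ => ?_
            congr 1
            rw [hGcoeff]
            by_cases hx2 : x.2 ≤ gamF m i
            · rw [if_pos hx2, dif_pos hx2, hMrow]
              simp only
              rw [dif_pos (idxF_lt i x.2 hx2)]
            · rw [if_neg hx2, dif_neg hx2]
        _ = ∑ i, ∑ x ∈ Finset.HasAntidiagonal.antidiagonal ℓ, ∑ s : Fin (2 * (r + m) + 1),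
              (if x.2 ≤ gamF m i ∧ idxF m i x.2 = (s : ℕ)
                then (u i).coeff x.1 else 0) * M s j := by
            refine Finset.sum_congr rfl fun i _ => Finset.sum_congr rfl fun x _ => ?_
            rw [sum_pick M ((u i).coeff x.1) (idxF m i x.2) (x.2 ≤ gamF m i)
              (fun h => idxF_lt i x.2 h) j]
            by_cases hx2 : x.2 ≤ gamF m i
            · rw [dif_pos hx2, dif_pos hx2]
            · rw [dif_neg hx2, dif_neg hx2, mul_zero]
        _ = ∑ s : Fin (2 * (r + m) + 1), ∑ i, ∑ x ∈ Finset.HasAntidiagonal.antidiagonal ℓ,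
              (if x.2 ≤ gamF m i ∧ idxF m i x.2 = (s : ℕ)
                then (u i).coeff x.1 else 0) * M s j := by
            exact (Finset.sum_congr rfl fun i _ => Finset.sum_comm).trans Finset.sum_comm
        _ = ∑ s : Fin (2 * (r + m) + 1), (∑ i, ∑ x ∈ Finset.HasAntidiagonal.antidiagonal ℓ,
              (if x.2 ≤ gamF m i ∧ idxF m i x.2 = (s : ℕ)
                then (u i).coeff x.1 else 0)) * M s j := by
            refine Finset.sum_congr rfl fun s _ => ?_
            rw [Finset.sum_mul]
            exact Finset.sum_congr rfl fun i _ => (Finset.sum_mul _ _ _).symm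
    have hcne : c ≠ 0 := by
      intro h
      apply hℓ
      rw [hlev j0, h]
      simp
    have hcard := hMw c hcne
    have hfe : Finset.univ.filter (fun j => ∑ s, c s * M s j ≠ 0)
        = Finset.univ.filter (fun j => (v j).coeff ℓ ≠ 0) :=
      Finset.filter_congr fun j _ => by rw [hlev j]
    rw [hfe] at hcard
    calc n - 2 * (r + m)
        ≤ (Finset.univ.filter (fun j => (v j).coeff ℓ ≠ 0)).card := hcard
      _ = ∑ j, if (v j).coeff ℓ ≠ 0 then 1 else 0 := Finset.card_filter _ _
      _ ≤ ∑ j, (v j).support.card := by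
          refine Finset.sum_le_sum fun j _ => ?_
          split_ifs with h
          · exact Finset.card_pos.mpr ⟨ℓ, Polynomial.mem_support_iff.mpr h⟩
          · exact Nat.zero_le _
      _ = polyWeight v := rfl
  exact ⟨G, ⟨⟨R, hGRbasic⟩, hmin⟩, hcdeg, hcmem, hdist⟩

theorem multi_memory_convolutional (p t q n a r m : ℕ) (hp : p.Prime) (hodd : Odd p)
    (ht : 2 ≤ t) (hq : q = p ^ t) (hn : n = q + 1) (ha : a = n / 2)
    (hr : 1 ≤ r) (hm : 2 ≤ m) (hrm1 : 3 ≤ r + m) (hrm2 : r + m ≤ a - 1)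
    (F : Type*) [Field F] [Fintype F] [DecidableEq F] (hF : Fintype.card F = q) :
    ∃ G : Matrix (Fin (2 * r + 1)) (Fin n) (Polynomial F),
      isReduced G ∧
      convDegree G = 2 * m ∧
      convMemory G = m ∧
      (∀ v ∈ convCode G, v ≠ 0 → n - 2 * (r + m) ≤ polyWeight v) := by
  classical
  have hqodd : Odd q := by rw [hq]; exact hodd.pow
  obtain ⟨b, hb⟩ := hqodd
  have hp3 : 3 ≤ p := by
    have h2 := hp.two_le
    obtain ⟨cc, hcc⟩ := hodd
    omega
  have hq3 : 3 ≤ q := le_trans hp3 (hq ▸ Nat.le_self_pow (by omega) p)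
  have hK : 2 * (r + m) + 1 ≤ q := by
    have ha' : a = (q + 1) / 2 := by rw [ha, hn]
    omega
  have e : Fin q ≃ F := (Fintype.equivFinOfCardEq hF).symm
  set M : Matrix (Fin (2 * (r + m) + 1)) (Fin n) F :=
    fun s j => if h : (j : ℕ) < q then (e ⟨j, h⟩) ^ (s : ℕ)
      else if (s : ℕ) = 2 * (r + m) + 1 - 1 then 1 else 0 with hM
  have hMspec : ∀ s j, M s j = if h : (j : ℕ) < q then (e ⟨j, h⟩) ^ (s : ℕ)
      else if (s : ℕ) = 2 * (r + m) + 1 - 1 then 1 else 0 := fun s j => rfl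
  have hMw : ∀ c : Fin (2 * (r + m) + 1) → F, c ≠ 0 →
      n - 2 * (r + m) ≤ (Finset.univ.filter (fun j => ∑ s, c s * M s j ≠ 0)).card := by
    intro c hc
    have := rsWeight hK (by omega) hn e M hMspec c hc
    simpa using this
  obtain ⟨N, hMN⟩ := rsRightInv hK hn e M hMspec
  exact mainAux q n r m hK hn hr hm M hMw N hMN
end

section
/- Let q = 2^t with t ≥ 1, n = q^2 + 1, and a = q^2/2. For 0 ≤ i, j ≤ q/2 − 1, the q^2-ary cyclotomic coset C_{a−i} modulo n is disjoint from −q·C_{a−j} mod n = {−q·x mod n : x ∈ C_{a−j}}. -/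
/-- The q²-ary cyclotomic coset of `s` modulo `n`. -/
def cyclotomicCoset (q2 n s : ℕ) : Set ℕ := {x | ∃ j : ℕ, x = s * q2 ^ j % n}

theorem coset_disjoint_neg_q_coset (t q n a : ℕ) (ht : 1 ≤ t) (hq : q = 2 ^ t)
    (hn : n = q ^ 2 + 1) (ha : a = q ^ 2 / 2)
    (i j : ℕ) (hi : i ≤ q / 2 - 1) (hj : j ≤ q / 2 - 1) :
    Disjoint (cyclotomicCoset (q ^ 2) n (a - i))
      {y : ℕ | ∃ x ∈ cyclotomicCoset (q ^ 2) n (a - j), y = (n - q * x % n) % n} := by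
  obtain ⟨s, rfl⟩ : ∃ s, t = s + 1 := ⟨t - 1, by omega⟩
  set h : ℕ := 2 ^ s with hh_def
  have hh : 1 ≤ h := Nat.one_le_two_pow
  have hqh : q = 2 * h := by rw [hq, pow_succ]; ring
  have hn' : n = 4 * h ^ 2 + 1 := by rw [hn, hqh]; ring_nf
  have ha' : a = 2 * h ^ 2 := by
    rw [ha, hqh]
    have h2 : (2 * h) ^ 2 = 2 * (2 * h ^ 2) := by ring
    rw [h2, Nat.mul_div_cancel_left _ (by norm_num : 0 < 2)]
  have hqd : q / 2 = h := by omega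
  have hi' : i + 1 ≤ h := by omega
  have hj' : j + 1 ≤ h := by omega
  have hle : h ≤ h ^ 2 := Nat.le_self_pow (by norm_num) h
  have hia : i ≤ a := by rw [ha']; linarith
  have hja : j ≤ a := by rw [ha']; linarith
  have hia2 : i ≤ 2 * h ^ 2 := by rw [← ha']; exact hia
  have hja2 : j ≤ 2 * h ^ 2 := by rw [← ha']; exact hja
  have key1 : (a - i) + q * (a - j) + (h + i + 2 * h * j) = h * n + 2 * h ^ 2 := by
    rw [ha', hqh, hn']; zify [hia2, hja2]; ring
  have key2 : (a - i) + i + h * n = q * (a - j) + (2 * h ^ 2 + h + 2 * h * j) := by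
    rw [ha', hqh, hn']; zify [hia2, hja2]; ring
  have hmul : 2 * h * (j + 1) ≤ 2 * h * h :=
    Nat.mul_le_mul_left _ hj'
  have hb1 : h + i + 2 * h * j < 2 * h ^ 2 := by
    have hp := pow_two h
    linarith [hmul, hi']
  have hb2 : 2 * h ^ 2 + h + 2 * h * j < n := by
    have hp := pow_two h
    rw [hn']; linarith [hmul]
  have hn0 : 0 < n := by rw [hn']; positivity
  haveI : NeZero n := ⟨hn0.ne'⟩
  rw [Set.disjoint_left]
  rintro x ⟨k, hk⟩ ⟨y, ⟨m, hm⟩, hx2⟩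
  have hq2c : ((q : ZMod n)) ^ 2 = -1 := by
    have h0 : ((q ^ 2 + 1 : ℕ) : ZMod n) = 0 := by rw [← hn]; exact ZMod.natCast_self n
    push_cast at h0
    linear_combination h0
  have hxA : (x : ZMod n) = ((a - i : ℕ) : ZMod n) * (-1) ^ k := by
    rw [hk, ZMod.natCast_mod, Nat.cast_mul, Nat.cast_pow, Nat.cast_pow, hq2c]
  have hy : (y : ZMod n) = ((a - j : ℕ) : ZMod n) * (-1) ^ m := by
    rw [hm, ZMod.natCast_mod, Nat.cast_mul, Nat.cast_pow, Nat.cast_pow, hq2c]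
  have hlt : q * y % n ≤ n := le_of_lt (Nat.mod_lt _ hn0)
  have hxB : (x : ZMod n) = -((q : ZMod n) * (y : ZMod n)) := by
    rw [hx2, ZMod.natCast_mod, Nat.cast_sub hlt, ZMod.natCast_self, ZMod.natCast_mod,
      Nat.cast_mul, zero_sub]
  have hEq : ((a - i : ℕ) : ZMod n) * (-1) ^ k
      = -((q : ZMod n) * (((a - j : ℕ) : ZMod n) * (-1) ^ m)) := by
    rw [← hxA, hxB, hy]
  have hnn : ((n : ℕ) : ZMod n) = 0 := ZMod.natCast_self n
  have hplusF : ((a - i : ℕ) : ZMod n) + (q : ZMod n) * ((a - j : ℕ) : ZMod n) ≠ 0 := by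
    intro h0
    have e0 : ((a - i : ℕ) : ZMod n) + (q : ZMod n) * ((a - j : ℕ) : ZMod n)
        + ((h : ZMod n) + (i : ZMod n) + 2 * (h : ZMod n) * (j : ZMod n))
        = (h : ZMod n) * (n : ZMod n) + 2 * (h : ZMod n) ^ 2 := by
      exact_mod_cast congrArg (Nat.cast : ℕ → ZMod n) key1
    have e1 : ((h + i + 2 * h * j : ℕ) : ZMod n) = ((2 * h ^ 2 : ℕ) : ZMod n) := by
      push_cast
      linear_combination e0 - h0 + (h : ZMod n) * hnn
    have e2 := (ZMod.natCast_eq_natCast_iff _ _ _).mp e1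
    have h2n : 2 * h ^ 2 < n := by rw [hn']; linarith
    have hsn : h + i + 2 * h * j < n := lt_trans hb1 h2n
    rw [Nat.ModEq, Nat.mod_eq_of_lt hsn, Nat.mod_eq_of_lt h2n] at e2
    exact absurd e2 (Nat.ne_of_lt hb1)
  have hminusF : ((a - i : ℕ) : ZMod n) ≠ (q : ZMod n) * ((a - j : ℕ) : ZMod n) := by
    intro h0
    have e0 : ((a - i : ℕ) : ZMod n) + (i : ZMod n) + (h : ZMod n) * (n : ZMod n)
        = (q : ZMod n) * ((a - j : ℕ) : ZMod n)
          + (2 * (h : ZMod n) ^ 2 + (h : ZMod n) + 2 * (h : ZMod n) * (j : ZMod n)) := by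
      exact_mod_cast congrArg (Nat.cast : ℕ → ZMod n) key2
    have e1 : ((i : ℕ) : ZMod n) = ((2 * h ^ 2 + h + 2 * h * j : ℕ) : ZMod n) := by
      push_cast
      linear_combination e0 - h0 - (h : ZMod n) * hnn
    have e2 := (ZMod.natCast_eq_natCast_iff _ _ _).mp e1
    have hin : i < n := by rw [hn']; linarith
    rw [Nat.ModEq, Nat.mod_eq_of_lt hin, Nat.mod_eq_of_lt hb2] at e2
    have : i < 2 * h ^ 2 + h + 2 * h * j := by
      have hp := pow_two h
      linarith [hi', Nat.zero_le (h * j), Nat.zero_le (h ^ 2)]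
    exact absurd e2 (Nat.ne_of_lt this)
  rcases Nat.even_or_odd k with hk' | hk' <;> rcases Nat.even_or_odd m with hm' | hm' <;>
    rw [hk'.neg_one_pow, hm'.neg_one_pow] at hEq <;>
      first
        | exact hplusF (by linear_combination hEq)
        | exact hplusF (by linear_combination -hEq)
        | exact hminusF (by linear_combination hEq)
        | exact hminusF (by linear_combination -hEq)
end
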